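/- Let p, q be distinct odd primes and r, s, x, t positive integers with x ≥ 3. There are no positive integers such that both p^r + q^s + ζ = p^{rx} and p^r + q^s - ζ = q^t hold for some ζ ∈ {1, -1}. -/

import Mathlib

theorem stmt_14 (p q r s x t : ℕ) (hp : p.Prime) (hpodd : Odd p)
    (hq : q.Prime) (hqodd : Odd q) (hpq : p ≠ q)
    (hr : 0 < r) (hs : 0 < s) (ht : 0 < t) (hx : 3 ≤ x) :
    ¬ ∃ ζ : ℤ, (ζ = 1 ∨ ζ = -1) ∧
      (p : ℤ) ^ r + (q : ℤ) ^ s + ζ = (p : ℤ) ^ (r * x) ∧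
      (p : ℤ) ^ r + (q : ℤ) ^ s - ζ = (q : ℤ) ^ t := by
  rintro ⟨ζ, hζ, h1, h2⟩
  have hp3 : (3 : ℤ) ≤ (p : ℤ) := by
    have h2le := hp.two_le
    rcases hpodd with ⟨k, hk⟩
    have : 3 ≤ p := by omega
    exact_mod_cast this
  have hq3 : (3 : ℤ) ≤ (q : ℤ) := by
    have h2le := hq.two_le
    rcases hqodd with ⟨k, hk⟩
    have : 3 ≤ q := by omega
    exact_mod_cast this
  have hζb : -1 ≤ ζ ∧ ζ ≤ 1 := by rcases hζ with rfl | rfl <;> norm_num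
  have hP3 : (3 : ℤ) ≤ (p : ℤ) ^ r := le_trans hp3 (le_self_pow₀ (by linarith) hr.ne')
  have hQ3 : (3 : ℤ) ≤ (q : ℤ) ^ s := le_trans hq3 (le_self_pow₀ (by linarith) hs.ne')
  have dvd1 : (p : ℤ) ^ r ∣ (q : ℤ) ^ s + ζ := by
    have heq : (q : ℤ) ^ s + ζ = (p : ℤ) ^ (r * x) - (p : ℤ) ^ r := by linarith
    rw [heq]
    exact dvd_sub (pow_dvd_pow _ (Nat.le_mul_of_pos_right r (by omega))) dvd_rfl
  have le1 : (p : ℤ) ^ r ≤ (q : ℤ) ^ s + ζ := Int.le_of_dvd (by linarith) dvd1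
  have hst : s < t := by
    have hlt : (q : ℤ) ^ s < (q : ℤ) ^ t := by linarith
    exact (pow_lt_pow_iff_right₀ (by linarith : (1:ℤ) < (q:ℤ))).mp hlt
  have dvd2 : (q : ℤ) ^ s ∣ (p : ℤ) ^ r - ζ := by
    have heq : (p : ℤ) ^ r - ζ = (q : ℤ) ^ t - (q : ℤ) ^ s := by linarith
    rw [heq]
    exact dvd_sub (pow_dvd_pow _ hst.le) dvd_rfl
  have le2 : (q : ℤ) ^ s ≤ (p : ℤ) ^ r - ζ := Int.le_of_dvd (by linarith) dvd2
  have heq : (p : ℤ) ^ r = (q : ℤ) ^ s + ζ := le_antisymm le1 (by linarith)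
  have h2P : (p : ℤ) ^ (r * x) = 2 * (p : ℤ) ^ r := by linarith
  have hodd : Odd ((p : ℤ) ^ (r * x)) := by
    exact (Int.odd_coe_nat p).mpr hpodd |>.pow
  rw [h2P] at hodd
  exact (Int.not_odd_iff_even.mpr (even_two_mul _)) hodd
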